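/- arXiv:2203.02401 — 3 statements merged into one kernel-verified Lean document; each statement's English description precedes it below -/
import Mathlib

section
/- Let β: ℝ → ℝ be a locally Lipschitz extended class K function, and let h: [0,∞) → ℝ be a differentiable function satisfying h'(t) ≥ −β(h(t)) for all t ≥ 0. If h(0) ≥ 0, then h(t) ≥ 0 for all t ≥ 0. -/
theorem cbf_comparison_lemma (β : ℝ → ℝ) (hcont : Continuous β)
    (hmono : StrictMono β) (h0 : β 0 = 0) (hlip : LocallyLipschitz β)
    (h h' : ℝ → ℝ) (hderiv : ∀ t ≥ (0:ℝ), HasDerivAt h (h' t) t)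
    (hineq : ∀ t ≥ (0:ℝ), h' t ≥ -β (h t)) (hinit : h 0 ≥ 0) :
    ∀ t ≥ (0:ℝ), h t ≥ 0 := by
  by_contra hc
  push_neg at hc
  obtain ⟨t₁, ht₁0, ht₁⟩ := hc
  have hconOn : ContinuousOn h (Set.Ici (0:ℝ)) := fun x hx =>
    ((hderiv x hx).continuousAt).continuousWithinAt
  set S : Set ℝ := {t | t ∈ Set.Icc (0:ℝ) t₁ ∧ h t ≥ 0} with hS
  have hSne : S.Nonempty := ⟨0, ⟨le_refl 0, ht₁0⟩, hinit⟩
  have hSbdd : BddAbove S := ⟨t₁, fun x hx => hx.1.2⟩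
  have hSclosed : IsClosed S := by
    have : S = Set.Icc (0:ℝ) t₁ ∩ h ⁻¹' Set.Ici 0 := by
      ext x; simp [hS, Set.mem_Icc, and_assoc]
    rw [this]
    exact (hconOn.mono (fun x hx => hx.1)).preimage_isClosed_of_isClosed
      isClosed_Icc isClosed_Ici
  set s := sSup S with hs
  have hsS : s ∈ S := hSclosed.csSup_mem hSne hSbdd
  have hs0 : 0 ≤ s := hsS.1.1
  have hst : s < t₁ := lt_of_le_of_ne hsS.1.2 (by
    intro he; exact absurd hsS.2 (by rw [he]; exact not_le.mpr ht₁))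
  -- On (s, t₁], h is negative, hence h' > 0 there
  have hneg : ∀ x, s < x → x ≤ t₁ → h x < 0 := by
    intro x hxs hxt
    by_contra hge
    push_neg at hge
    have : x ∈ S := ⟨⟨le_trans hs0 hxs.le, hxt⟩, hge⟩
    exact absurd (le_csSup hSbdd this) (not_le.mpr hxs)
  have hmonoOn : StrictMonoOn h (Set.Icc s t₁) := by
    apply strictMonoOn_of_deriv_pos (convex_Icc s t₁)
    · exact hconOn.mono (fun x hx => le_trans hs0 hx.1)
    · intro x hx
      rw [interior_Icc] at hx
      have hx0 : (0:ℝ) ≤ x := le_trans hs0 hx.1.le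
      rw [(hderiv x hx0).deriv]
      have hβ : β (h x) < 0 := by
        rw [← h0]; exact hmono (hneg x hx.1 hx.2.le)
      have := hineq x hx0
      linarith
  have : h s < h t₁ :=
    hmonoOn (Set.left_mem_Icc.mpr hst.le) (Set.right_mem_Icc.mpr hst.le) hst
  linarith [hsS.2]
end

section
/- Consider the double integrator ẋ₁ = x₂, ẋ₂ = u, and the safety constraint b(x) = x₁ ≥ 0. Define ψ₀(x) = x₁ and ψ₁(x) = x₂ + γ₁x₁ with γ₁ > 0, and suppose a trajectory (x₁(t), x₂(t)) with control u(t) satisfies u(t) + γ₁x₂(t) + γ₂(x₂(t) + γ₁x₁(t)) ≥ 0 for all t ≥ 0, with γ₂ > 0. If ψ₀(x(0)) ≥ 0 and ψ₁(x(0)) ≥ 0, then x₁(t) ≥ 0 for all t ≥ 0. -/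
/-- Comparison lemma: if ψ' + γψ ≥ 0 on [0,∞) and ψ(0) ≥ 0, then ψ ≥ 0 on [0,∞). -/
lemma hocbf_aux (γ : ℝ) (ψ ψ' : ℝ → ℝ)
    (hd : ∀ t, HasDerivAt ψ (ψ' t) t)
    (h : ∀ t ≥ (0:ℝ), ψ' t + γ * ψ t ≥ 0)
    (h0 : ψ 0 ≥ 0) : ∀ t ≥ (0:ℝ), ψ t ≥ 0 := by
  set g : ℝ → ℝ := fun t => ψ t * Real.exp (γ * t) with hg
  have hgd : ∀ t, HasDerivAt g ((ψ' t + γ * ψ t) * Real.exp (γ * t)) t := by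
    intro t
    have he : HasDerivAt (fun t => Real.exp (γ * t)) (γ * Real.exp (γ * t)) t := by
      have := (Real.hasDerivAt_exp (γ * t)).comp t ((hasDerivAt_id t).const_mul γ)
      simpa [mul_comm, Function.comp_def] using this
    have := (hd t).mul he
    exact this.congr_deriv (by ring)
  have hmono : MonotoneOn g (Set.Ici (0:ℝ)) := by
    apply monotoneOn_of_deriv_nonneg (convex_Ici 0)
    · intro t _
      exact (hgd t).continuousAt.continuousWithinAt
    · intro t ht
      exact (hgd t).differentiableAt.differentiableWithinAt
    · intro t ht
      rw [interior_Ici] at ht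
      rw [(hgd t).deriv]
      exact mul_nonneg (h t (le_of_lt ht)) (Real.exp_pos _).le
  intro t ht
  have : g 0 ≤ g t := hmono (Set.self_mem_Ici) ht ht
  have hg0 : g 0 = ψ 0 := by simp [hg]
  have hgt : 0 ≤ ψ t * Real.exp (γ * t) := by
    have h2 : g t = ψ t * Real.exp (γ * t) := rfl
    rw [hg0, h2] at this; linarith
  nlinarith [Real.exp_pos (γ * t)]

/-- HOCBF theorem for the double integrator with linear class K functions. -/
theorem hocbf_double_integrator (γ₁ γ₂ : ℝ) (hγ₁ : 0 < γ₁) (hγ₂ : 0 < γ₂)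
    (x₁ x₂ u : ℝ → ℝ) (hu : Continuous u)
    (hd₁ : ∀ t, HasDerivAt x₁ (x₂ t) t)
    (hd₂ : ∀ t, HasDerivAt x₂ (u t) t)
    (hcbf : ∀ t ≥ (0:ℝ), u t + γ₁ * x₂ t + γ₂ * (x₂ t + γ₁ * x₁ t) ≥ 0)
    (hψ₀ : x₁ 0 ≥ 0) (hψ₁ : x₂ 0 + γ₁ * x₁ 0 ≥ 0) :
    ∀ t ≥ (0:ℝ), x₁ t ≥ 0 := by
  have hψ : ∀ t ≥ (0:ℝ), x₂ t + γ₁ * x₁ t ≥ 0 := by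
    apply hocbf_aux γ₂ (fun t => x₂ t + γ₁ * x₁ t) (fun t => u t + γ₁ * x₂ t)
    · intro t
      exact (hd₂ t).add ((hd₁ t).const_mul γ₁)
    · intro t ht
      have := hcbf t ht
      linarith
    · exact hψ₁
  apply hocbf_aux γ₁ x₁ x₂ hd₁
  · intro t ht
    have := hψ t ht
    linarith
  · exact hψ₀
end

section
/- Let ψ₀ = b and ψ_i = ψ̇_{i−1} + α_i(ψ_{i−1}) for i = 1,…,m as in the HOCBF construction, with C_i = {x : ψ_{i−1}(x) ≥ 0}. Along any trajectory x(t), if ψ_m(x(t)) ≥ 0 for all t ≥ 0 and x(0) ∈ C₁ ∩ … ∩ C_m, then x(t) ∈ C₁ ∩ … ∩ C_m for all t ≥ 0, assuming each ψ_{i−1} ∘ x is continuously differentiable with d/dt(ψ_{i−1}(x(t))) = ψ_i(x(t)) − α_i(ψ_{i−1}(x(t))) and each α_i is a locally Lipschitz extended class K function. -/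
/-- Scalar comparison lemma: if `y` has derivative `g t ≥ -α (y t)` for `t ≥ 0`,
`α` is strictly monotone with `α 0 = 0`, and `y 0 ≥ 0`, then `y t ≥ 0` for `t ≥ 0`. -/
lemma hocbf_comparison (y g : ℝ → ℝ) (α : ℝ → ℝ) (hα : StrictMono α) (hα0 : α 0 = 0)
    (hd : ∀ t ≥ (0:ℝ), HasDerivAt y (g t) t)
    (hg : ∀ t ≥ (0:ℝ), g t ≥ -α (y t)) (hy0 : y 0 ≥ 0) :
    ∀ t ≥ (0:ℝ), y t ≥ 0 := by
  intro T hT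
  by_contra hyT
  push_neg at hyT
  have hcont : ContinuousOn y (Set.Icc 0 T) := fun t ht =>
    ((hd t ht.1).continuousAt).continuousWithinAt
  set S : Set ℝ := Set.Icc 0 T ∩ y ⁻¹' Set.Ici 0 with hS
  have hSclosed : IsClosed S :=
    hcont.preimage_isClosed_of_isClosed isClosed_Icc isClosed_Ici
  have h0S : (0:ℝ) ∈ S := ⟨⟨le_refl 0, hT⟩, hy0⟩
  have hSne : S.Nonempty := ⟨0, h0S⟩
  have hSbdd : BddAbove S := ⟨T, fun t ht => ht.1.2⟩
  set s := sSup S with hs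
  have hsS : s ∈ S := hSclosed.csSup_mem hSne hSbdd
  have hs0 : 0 ≤ s := hsS.1.1
  have hsT : s ≤ T := hsS.1.2
  have hys : 0 ≤ y s := hsS.2
  have hsltT : s < T := lt_of_le_of_ne hsT (fun h => by rw [h] at hys; linarith)
  have hneg : ∀ t, s < t → t ≤ T → y t < 0 := by
    intro t hst htT
    by_contra h
    push_neg at h
    have : t ∈ S := ⟨⟨le_trans hs0 hst.le, htT⟩, h⟩
    exact absurd (le_csSup hSbdd this) (not_le.mpr hst)
  have hmono : MonotoneOn y (Set.Icc s T) := by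
    apply monotoneOn_of_deriv_nonneg (convex_Icc s T)
    · exact fun t ht => ((hd t (le_trans hs0 ht.1)).continuousAt).continuousWithinAt
    · intro t ht
      rw [interior_Icc] at ht
      exact ((hd t (le_trans hs0 ht.1.le)).differentiableAt).differentiableWithinAt
    · intro t ht
      rw [interior_Icc] at ht
      have ht0 : (0:ℝ) ≤ t := le_trans hs0 ht.1.le
      rw [(hd t ht0).deriv]
      have hyt : y t < 0 := hneg t ht.1 ht.2.le
      have : α (y t) < 0 := hα0 ▸ hα hyt
      linarith [hg t ht0]
  have := hmono ⟨le_refl s, hsT⟩ ⟨hsT, le_refl T⟩ hsT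
  -- y s ≤ y T
  linarith

/-- Forward invariance of the HOCBF sets along a fixed trajectory:
`ψ 0 = b`, and for `i < m`, `d/dt ψ i (x t) = ψ (i+1) (x t) − α (i+1) (ψ i (x t))`
with each `α (i+1)` a locally Lipschitz extended class K function. If
`ψ m (x t) ≥ 0` for all `t ≥ 0` and `ψ i (x 0) ≥ 0` for all `i < m`, then
`ψ i (x t) ≥ 0` for all `t ≥ 0` and all `i < m`. -/
theorem hocbf_forward_invariance {n : ℕ} (m : ℕ) (hm : 0 < m)
    (x : ℝ → (Fin n → ℝ)) (ψ : ℕ → (Fin n → ℝ) → ℝ) (α : ℕ → ℝ → ℝ)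
    (hK : ∀ i, 1 ≤ i → i ≤ m →
      StrictMono (α i) ∧ α i 0 = 0 ∧ Continuous (α i) ∧ LocallyLipschitz (α i))
    (hderiv : ∀ i < m, ∀ t ≥ (0:ℝ),
      HasDerivAt (fun s => ψ i (x s)) (ψ (i + 1) (x t) - α (i + 1) (ψ i (x t))) t)
    (hcbf : ∀ t ≥ (0:ℝ), ψ m (x t) ≥ 0)
    (hinit : ∀ i < m, ψ i (x 0) ≥ 0) :
    ∀ t ≥ (0:ℝ), ∀ i < m, ψ i (x t) ≥ 0 := by
  have key : ∀ j, ∀ i, i + j = m → ∀ t ≥ (0:ℝ), ψ i (x t) ≥ 0 := by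
    intro j
    induction j with
    | zero => intro i hi t ht; simpa [← hi] using hcbf t ht
    | succ j ih =>
      intro i hi t ht
      have him : i < m := by omega
      have hnext : ∀ t ≥ (0:ℝ), ψ (i + 1) (x t) ≥ 0 := ih (i + 1) (by omega)
      obtain ⟨hmono, h0, -, -⟩ := hK (i + 1) (by omega) (by omega)
      exact hocbf_comparison (fun s => ψ i (x s))
        (fun t => ψ (i + 1) (x t) - α (i + 1) (ψ i (x t))) (α (i + 1)) hmono h0
        (hderiv i him) (fun t ht => by have := hnext t ht; simp only [ge_iff_le]; linarith)
        (hinit i him) t ht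
  intro t ht i hi
  exact key (m - i) i (by omega) t ht
end
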